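/- Let n ≥ 1 and let Ĩ_n ∈ M_n(ℝ) be the diagonal matrix with diagonal entries (-1, 1, …, 1). The set of matrices M ∈ M_n(ℝ) with det M < 0 is exactly the set of matrices of the form Ĩ_n · e^{M_1} ⋯ e^{M_m} where m ≥ 1 and M_1, …, M_m ∈ M_n(ℝ). -/

import Mathlib

open Matrix NormedSpace

namespace Stmt12Aux

variable {n : ℕ}

local notation "Mat" => Matrix (Fin n) (Fin n) ℝ

lemma exp_of_sq_zero (A : Mat) (h : A * A = 0) : exp A = 1 + A := by
  have hpow : ∀ k, 2 ≤ k → A ^ k = 0 := by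
    intro k hk
    obtain ⟨m, rfl⟩ := Nat.exists_eq_add_of_le hk
    rw [pow_add, sq, h, zero_mul]
  simp only [exp_eq_tsum ℝ]
  rw [tsum_eq_sum (s := Finset.range 2) (by
    intro b hb
    rw [hpow b (by simp at hb; omega), smul_zero])]
  simp [Finset.sum_range_succ]

lemma exp_stdBasis {i j : Fin n} (hij : i ≠ j) (c : ℝ) :
    exp (single i j c) = transvection i j c := by
  rw [exp_of_sq_zero _ (by simp [Ne.symm hij]), transvection]

lemma exp_det_pos (A : Mat) : 0 < (exp A).det := by
  have h2 : exp A = exp ((1/2 : ℝ) • A) * exp ((1/2 : ℝ) • A) := by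
    rw [← Matrix.exp_add_of_commute _ _ (Commute.refl _)]
    congr 1
    module
  have hunit : (exp A).det ≠ 0 := by
    have h1 : exp A * exp (-A) = 1 := by
      rw [← Matrix.exp_add_of_commute _ _ ((Commute.refl A).neg_right)]
      simp
    intro h0
    have := congrArg Matrix.det h1
    rw [det_mul, h0, zero_mul, det_one] at this
    exact zero_ne_one this
  rw [h2, det_mul]
  rcases (mul_self_nonneg (exp ((1/2 : ℝ) • A)).det).lt_or_eq with h | h
  · exact h
  · exfalso
    apply hunit
    rw [h2, det_mul, ← h]

lemma diag_flip (i j : Fin n) (hij : i ≠ j) :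
    diagonal (fun k => if k = i ∨ k = j then (-1 : ℝ) else 1)
      = (1 : Mat) - single i i (2:ℝ) - single j j (2:ℝ) := by
  ext a b
  simp only [Matrix.diagonal_apply, Matrix.sub_apply, Matrix.one_apply,
    Matrix.single, Matrix.of_apply]
  by_cases hab : a = b <;> by_cases hai : a = i <;> by_cases haj : a = j <;>
    simp_all [eq_comm] <;> norm_num

/-- the plane flip as a product of 6 exponentials -/
lemma flip_eq (i j : Fin n) (hij : i ≠ j) :
    ∃ l : List Mat, l ≠ [] ∧ (l.map (exp)).prod
      = diagonal (fun k => if k = i ∨ k = j then (-1 : ℝ) else 1) := by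
  have hij' : j ≠ i := Ne.symm hij
  set E : Fin n → Fin n → Mat := fun a b => single a b (1 : ℝ) with hE
  refine ⟨[E i j, -E j i, E i j, E i j, -E j i, E i j], by simp, ?_⟩
  have hexpU : exp (E i j) = 1 + E i j := by
    apply exp_of_sq_zero
    simp [hE, hij, hij']
  have hexpV : exp (-E j i) = 1 - E j i := by
    rw [show (1 : Mat) - E j i = 1 + (- E j i) from sub_eq_add_neg 1 (E j i)]
    apply exp_of_sq_zero
    simp [hE, hij, hij']
  have h1 : E i j * E j i = E i i := by simp [hE]
  have h2 : E j i * E i j = E j j := by simp [hE]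
  have h3 : E i j * E i j = 0 := by simp [hE, hij, hij']
  have h4 : E j i * E j i = 0 := by simp [hE, hij, hij']
  have h5 : E i i * E i j = E i j := by simp [hE]
  have h6 : E j j * E i j = 0 := by simp [hE, hij, hij']
  have h7 : E i i * E j i = 0 := by simp [hE, hij, hij']
  have h8 : E j j * E j i = E j i := by simp [hE]
  have h9 : E i j * E j j = E i j := by simp [hE]
  have h10 : E j i * E i i = E j i := by simp [hE]
  have h11 : E i i * E i i = E i i := by simp [hE]
  have h12 : E j j * E j j = E j j := by simp [hE]
  have h13 : E i i * E j j = 0 := by simp [hE, hij, hij']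
  have h14 : E j j * E i i = 0 := by simp [hE, hij, hij']
  have h15 : E i j * E i i = 0 := by simp [hE, hij, hij']
  have h16 : E j i * E j j = 0 := by simp [hE, hij, hij']
  have hW : (1 + E i j) * (1 - E j i) * (1 + E i j)
      = 1 + E i j - E j i - E i i - E j j := by
    noncomm_ring [h1, h2, h3, h4, h5, h6]
  have hWW : (1 + E i j - E j i - E i i - E j j) * (1 + E i j - E j i - E i i - E j j)
      = 1 - single i i (2:ℝ) - single j j (2:ℝ) := by
    have h2E : single i i (2:ℝ) = E i i + E i i := by
      rw [hE]; simp only [← Matrix.single_add]; norm_num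
    have h2F : single j j (2:ℝ) = E j j + E j j := by
      rw [hE]; simp only [← Matrix.single_add]; norm_num
    rw [h2E, h2F]
    noncomm_ring [h1, h2, h3, h4, h5, h6, h7, h8, h9, h10, h11, h12, h13, h14, h15, h16]
  have hdiag := diag_flip i j hij
  simp only [List.map_cons, List.map_nil, List.prod_cons, List.prod_nil, mul_one,
    hexpU, hexpV, hdiag]
  rw [← hWW, ← hW]
  simp only [mul_assoc]

lemma sign_diag : ∀ N : Finset (Fin n), Even N.card →
    ∃ l : List Mat, (l.map (exp)).prod = diagonal (fun k => if k ∈ N then (-1 : ℝ) else 1) := by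
  intro N
  induction N using Finset.strongInduction with
  | _ N ih =>
    intro hcard
    rcases Finset.eq_empty_or_nonempty N with rfl | ⟨i, hi⟩
    · exact ⟨[], by simp⟩
    · have h1 : 1 ≤ N.card := Finset.card_pos.mpr ⟨i, hi⟩
      have h2 : 2 ≤ N.card := by
        rcases hcard with ⟨m, hm⟩; omega
      have hne : (N.erase i).Nonempty := by
        rw [← Finset.card_pos, Finset.card_erase_of_mem hi]; omega
      obtain ⟨j, hj⟩ := hne
      have hji : j ≠ i := (Finset.mem_erase.mp hj).1
      have hjN : j ∈ N := (Finset.mem_erase.mp hj).2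
      set N' : Finset (Fin n) := (N.erase i).erase j with hN'
      have hsub : N' ⊂ N := by
        apply Finset.ssubset_of_subset_of_ssubset (Finset.erase_subset _ _)
        exact Finset.erase_ssubset hi
      have hcard' : N'.card = N.card - 2 := by
        rw [hN', Finset.card_erase_of_mem hj, Finset.card_erase_of_mem hi]
        omega
      have heven' : Even N'.card := by
        rcases hcard with ⟨m, hm⟩
        exact ⟨m - 1, by omega⟩
      obtain ⟨l', hl'⟩ := ih N' hsub heven'
      obtain ⟨lf, hlfne, hlf⟩ := flip_eq i j (Ne.symm hji)
      refine ⟨lf ++ l', ?_⟩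
      rw [List.map_append, List.prod_append, hlf, hl', diagonal_mul_diagonal]
      have hfun : (fun k => (if k = i ∨ k = j then (-1 : ℝ) else 1)
          * (if k ∈ N' then (-1 : ℝ) else 1)) = fun k => if k ∈ N then (-1 : ℝ) else 1 := by
        funext k
        by_cases hki : k = i
        · subst hki
          rw [if_pos (Or.inl rfl), if_neg (by simp [hN', Finset.mem_erase]), if_pos hi]
          norm_num
        · by_cases hkj : k = j
          · subst hkj
            rw [if_pos (Or.inr rfl), if_neg (by simp [hN', Finset.mem_erase]), if_pos hjN]
            norm_num
          · rw [if_neg (by tauto)]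
            have hiff : k ∈ N' ↔ k ∈ N := by
              simp [hN', Finset.mem_erase, hki, hkj]
            by_cases hkN : k ∈ N
            · rw [if_pos (hiff.mpr hkN), if_pos hkN]; norm_num
            · rw [if_neg (fun h => hkN (hiff.mp h)), if_neg hkN]; norm_num
      rw [hfun]

lemma prod_exp_of_det_pos (P : Mat) (h : 0 < P.det) :
    ∃ l : List Mat, l ≠ [] ∧ P = (l.map (exp)).prod := by
  obtain ⟨L, L', D, hP⟩ := Pivot.exists_list_transvec_mul_diagonal_mul_list_transvec P
  have hdet : P.det = ∏ i, D i := by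
    rw [hP, det_mul, det_mul, TransvectionStruct.det_toMatrix_prod,
      TransvectionStruct.det_toMatrix_prod, det_diagonal, one_mul, mul_one]
  have hDpos : 0 < ∏ i, D i := hdet ▸ h
  have hDne : ∀ i, D i ≠ 0 := by
    intro i hi
    exact absurd (Finset.prod_eq_zero (Finset.mem_univ i) hi) (ne_of_gt hDpos)
  set N : Finset (Fin n) := Finset.univ.filter (fun i => D i < 0) with hN
  set s : Fin n → ℝ := fun i => if i ∈ N then (-1 : ℝ) else 1 with hs
  have hsD : ∀ i, D i = |D i| * s i := by
    intro i
    rw [hs, hN]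
    simp only [Finset.mem_filter, Finset.mem_univ, true_and]
    rcases lt_or_ge (D i) 0 with hlt | hle
    · rw [if_pos hlt, abs_of_neg hlt]; ring
    · rw [if_neg (not_lt.mpr hle), abs_of_nonneg hle, mul_one]
  have habs_pos : 0 < ∏ i, |D i| := Finset.prod_pos fun i _ => abs_pos.mpr (hDne i)
  have hsplit : (∏ i, D i) = (∏ i, |D i|) * ∏ i, s i := by
    rw [← Finset.prod_mul_distrib]
    exact Finset.prod_congr rfl fun i _ => hsD i
  have hspos : 0 < ∏ i, s i := by
    by_contra hcon
    push_neg at hcon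
    nlinarith
  have hsval : (∏ i, s i) = (-1 : ℝ) ^ N.card := by
    rw [hs]
    rw [Finset.prod_ite_mem Finset.univ N (fun _ => (-1 : ℝ)), Finset.univ_inter,
      Finset.prod_const]
  have heven : Even N.card := by
    rcases Nat.even_or_odd N.card with he | ho
    · exact he
    · exfalso
      rw [hsval, ho.neg_one_pow] at hspos
      norm_num at hspos
  obtain ⟨ls, hls⟩ := sign_diag N heven
  have hdiagD : diagonal D
      = exp (diagonal fun i => Real.log |D i|) * (ls.map (exp)).prod := by
    rw [hls, Matrix.exp_diagonal, Pi.exp_def, diagonal_mul_diagonal]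
    refine congrArg diagonal ?_
    funext i
    rw [← Real.exp_eq_exp_ℝ, Real.exp_log (abs_pos.mpr (hDne i))]
    exact hsD i
  have htr : ∀ L₀ : List (TransvectionStruct (Fin n) ℝ),
      ((L₀.map fun t => single t.i t.j t.c).map (exp)).prod
        = (L₀.map TransvectionStruct.toMatrix).prod := by
    intro L₀
    rw [List.map_map]
    congr 1
    apply List.map_congr_left
    intro t _
    exact exp_stdBasis t.hij t.c
  refine ⟨(L.map fun t => single t.i t.j t.c)
      ++ ((diagonal fun i => Real.log |D i|) :: (ls
      ++ (L'.map fun t => single t.i t.j t.c))), ?_, ?_⟩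
  · intro hnil
    simpa using congrArg List.length hnil
  · rw [List.map_append, List.prod_append, List.map_cons, List.prod_cons,
      List.map_append, List.prod_append, htr, htr, hP, hdiagD]
    noncomm_ring

end Stmt12Aux

open Stmt12Aux in
/-- For `n ≥ 1`, with `Ĩₙ = diag(-1, 1, …, 1)`, the set of real `n × n` matrices with
negative determinant is exactly the set of matrices `Ĩₙ · e^{M₁} ⋯ e^{Mₘ}` with `m ≥ 1`. -/
theorem stmt12 {n : ℕ} (hn : 1 ≤ n) :
    {M : Matrix (Fin n) (Fin n) ℝ | M.det < 0} =
      {M : Matrix (Fin n) (Fin n) ℝ |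
        ∃ l : List (Matrix (Fin n) (Fin n) ℝ), l ≠ [] ∧
          M = (Matrix.diagonal fun i : Fin n => if (i : ℕ) = 0 then (-1 : ℝ) else 1) *
              (l.map (NormedSpace.exp)).prod} := by
  set e : Fin n → ℝ := fun i => if (i : ℕ) = 0 then (-1 : ℝ) else 1 with he
  have hI2 : diagonal e * diagonal e = 1 := by
    rw [diagonal_mul_diagonal]
    convert Matrix.diagonal_one using 2
    funext i
    rw [he]
    dsimp only
    split_ifs <;> norm_num
  have hdetI : (diagonal e).det = -1 := by
    rw [det_diagonal,
      show e = fun i => if i = (⟨0, hn⟩ : Fin n) then (-1 : ℝ) else 1 from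
        funext fun i => by rw [he]; simp [Fin.ext_iff]]
    rw [Finset.prod_ite_eq' Finset.univ (⟨0, hn⟩ : Fin n) fun _ => (-1 : ℝ)]
    simp
  have hprodpos : ∀ l : List (Matrix (Fin n) (Fin n) ℝ),
      0 < ((l.map (NormedSpace.exp)).prod).det := by
    intro l
    induction l with
    | nil => simp
    | cons a t ih =>
      rw [List.map_cons, List.prod_cons, det_mul]
      exact mul_pos (exp_det_pos a) ih
  ext M
  simp only [Set.mem_setOf_eq]
  constructor
  · intro hM
    have hPdet : 0 < (diagonal e * M).det := by
      rw [det_mul, hdetI]; nlinarith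
    obtain ⟨l, hl, hprod⟩ := prod_exp_of_det_pos _ hPdet
    exact ⟨l, hl, by rw [← hprod, ← mul_assoc, hI2, one_mul]⟩
  · rintro ⟨l, hl, rfl⟩
    rw [det_mul, hdetI]
    nlinarith [hprodpos l]
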